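/- arXiv:2001.00278 — 13 statements merged into one kernel-verified Lean document; each statement's English description precedes it below -/
import Mathlib

section
/- Let F be a vertex-preserving endofunctor on the category of directed graphs (with self-loops, morphisms being edge-preserving maps). Then F is arrow increasing (i.e., G embeds into F(G) for every graph G) if and only if F(L2) is L2 or K2, where L2 is the two-vertex graph with a single arrow a1→a2. -/
/-- A graph map between directed graphs (vertices `V`, arrow relation `E`):
it sends every arrow to an arrow or collapses it to a single vertex
(self-loops are implicitly present / handled by reflexivity). -/
def IsGraphMap {V W : Type} (E : V → V → Prop) (E' : W → W → Prop) (φ : V → W) : Prop :=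
  ∀ x y, E x y → E' (φ x) (φ y) ∨ φ x = φ y

/-- A vertex-preserving endofunctor on the category of finite directed graphs
(graphs are reflexive relations, since all self-loops are present; the functor
keeps the vertex set fixed and sends each graph map to itself). -/
structure GraphFunctor where
  obj : ∀ (V : Type) [Finite V], (V → V → Prop) → (V → V → Prop)
  refl : ∀ (V : Type) [Finite V] (E : V → V → Prop), Reflexive E → Reflexive (obj V E)
  map : ∀ (V W : Type) [Finite V] [Finite W] (E : V → V → Prop) (E' : W → W → Prop)
      (φ : V → W), Reflexive E → Reflexive E' →
      IsGraphMap E E' φ → IsGraphMap (obj V E) (obj W E') φ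

/-- The two-vertex line graph `L2` : a single arrow `0 → 1` (plus self-loops). -/
def L2rel : Fin 2 → Fin 2 → Prop := fun a b => a = b ∨ (a = 0 ∧ b = 1)

/-- The complete graph `K2` on two vertices. -/
def K2rel : Fin 2 → Fin 2 → Prop := fun _ _ => True

/-- The discrete graph `D2` on two vertices (only self-loops). -/
def D2rel : Fin 2 → Fin 2 → Prop := fun a b => a = b

lemma L2refl : Reflexive L2rel := fun _ => Or.inl rfl

/-- F is arrow increasing iff F(L2) is L2 or K2. -/
theorem arrow_increasing_iff (F : GraphFunctor) :
    (∀ (V : Type) [Finite V] (E : V → V → Prop), Reflexive E →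
        ∀ x y, E x y → F.obj V E x y) ↔
    (F.obj (Fin 2) L2rel = L2rel ∨ F.obj (Fin 2) L2rel = K2rel) := by
  constructor
  · intro h
    have h01 : F.obj (Fin 2) L2rel 0 1 := h (Fin 2) L2rel L2refl 0 1 (Or.inr ⟨rfl, rfl⟩)
    have hrefl : Reflexive (F.obj (Fin 2) L2rel) := F.refl (Fin 2) L2rel L2refl
    by_cases h10 : F.obj (Fin 2) L2rel 1 0
    · right
      funext a b
      apply propext
      constructor
      · intro _; trivial
      · intro _
        fin_cases a <;> fin_cases b
        · exact hrefl 0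
        · exact h01
        · exact h10
        · exact hrefl 1
    · left
      funext a b
      apply propext
      constructor
      · intro hab
        fin_cases a <;> fin_cases b
        · exact Or.inl rfl
        · exact Or.inr ⟨rfl, rfl⟩
        · exact absurd hab h10
        · exact Or.inl rfl
      · intro hab
        rcases hab with rfl | ⟨rfl, rfl⟩
        · exact hrefl a
        · exact h01
  · intro h V _ E hE x y hxy
    have h01 : F.obj (Fin 2) L2rel 0 1 := by
      rcases h with h | h <;> rw [h]
      · exact Or.inr ⟨rfl, rfl⟩
      · trivial
    set φ : Fin 2 → V := fun i => if i = 0 then x else y with hφ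
    have hmap : IsGraphMap L2rel E φ := by
      intro a b hab
      rcases hab with rfl | ⟨rfl, rfl⟩
      · exact Or.inr rfl
      · left; simpa [hφ] using hxy
    have := F.map (Fin 2) V L2rel E φ L2refl hE hmap 0 1 h01
    simpa [hφ] using this.elim id (fun he => he ▸ F.refl V E hE x)
end

section
/- Let F be a vertex-preserving endofunctor on directed graphs. If F(D2) ≠ D2 (where D2 is the two-vertex graph with no non-loop arrows), then F is the full completion functor, i.e., F(G) is the complete graph on the vertex set of G for every graph G. -/
/-- if F(D2) ≠ D2 then F is the full completion functor. -/
theorem full_completion_of_D2 (F : GraphFunctor)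
    (h : F.obj (Fin 2) D2rel ≠ D2rel) :
    ∀ (V : Type) [Finite V] (E : V → V → Prop), Reflexive E →
      ∀ x y, F.obj V E x y := by
  have hD2refl : Reflexive D2rel := fun a => rfl
  -- any function out of D2 is a graph map
  have hany : ∀ {W : Type} (E' : W → W → Prop) (φ : Fin 2 → W),
      IsGraphMap D2rel E' φ := by
    intro W E' φ x y hxy
    exact Or.inr (by rw [hxy])
  -- F(D2) has some non-loop edge
  have hex : ∃ a b : Fin 2, a ≠ b ∧ F.obj (Fin 2) D2rel a b := by
    by_contra hc
    push_neg at hc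
    apply h
    funext a b
    apply propext
    constructor
    · intro hab
      by_contra hne
      exact hc a b hne hab
    · intro hab
      exact hab ▸ F.refl (Fin 2) D2rel hD2refl a
  obtain ⟨a, b, hab, hedge⟩ := hex
  -- both non-loop edges hold in F(D2)
  have hall : ∀ x y : Fin 2, F.obj (Fin 2) D2rel x y := by
    have hswap := F.map (Fin 2) (Fin 2) D2rel D2rel (fun i => 1 - i)
      hD2refl hD2refl (hany D2rel _) a b hedge
    have hswap' : F.obj (Fin 2) D2rel (1 - a) (1 - b) := by
      rcases hswap with h' | h'
      · exact h'
      · exfalso; apply hab; fin_cases a <;> fin_cases b <;> simp_all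
    intro x y
    rcases eq_or_ne x y with rfl | hxy
    · exact F.refl (Fin 2) D2rel hD2refl x
    · have hxa : (x = a ∧ y = b) ∨ (x = 1 - a ∧ y = 1 - b) := by omega
      rcases hxa with ⟨rfl, rfl⟩ | ⟨rfl, rfl⟩
      · exact hedge
      · exact hswap'
  intro V _ E hE x y
  rcases eq_or_ne x y with rfl | hxy
  · exact F.refl V E hE x
  · have := F.map (Fin 2) V D2rel E ![x, y] hD2refl hE (hany E _) 0 1 (hall 0 1)
    simpa [hxy] using this
end

section
/- Let F be a vertex-preserving endofunctor on directed graphs. If F(K2) ≠ K2 (where K2 is the complete graph on two vertices), then F is the full disconnection functor, i.e., F(G) is the totally disconnected graph on the vertex set of G for every graph G. -/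
/-- if F(K2) ≠ K2 then F is the full disconnection functor. -/
theorem full_disconnection_of_K2 (F : GraphFunctor)
    (h : F.obj (Fin 2) K2rel ≠ K2rel) :
    ∀ (V : Type) [Finite V] (E : V → V → Prop), Reflexive E →
      ∀ x y, F.obj V E x y ↔ x = y := by
  classical
  intro V _ E hrefl x y
  constructor
  · intro hFxy
    by_contra hne
    obtain ⟨a, b, hab⟩ : ∃ a b, ¬ F.obj (Fin 2) K2rel a b := by
      by_contra hc
      push_neg at hc
      exact h (funext fun a => funext fun b => eq_true (hc a b))
    set φ : V → Fin 2 := fun v => if v = x then a else b with hφ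
    have hmap : IsGraphMap E K2rel φ := fun _ _ _ => Or.inl trivial
    have hres := F.map V (Fin 2) E K2rel φ hrefl (fun _ => trivial) hmap x y hFxy
    have hφx : φ x = a := if_pos rfl
    have hφy : φ y = b := if_neg (fun hyx => hne hyx.symm)
    rw [hφx, hφy] at hres
    rcases hres with h1 | h1
    · exact hab h1
    · exact hab (h1 ▸ F.refl (Fin 2) K2rel (fun _ => trivial) a)
  · rintro rfl
    exact F.refl V E hrefl x
end

section
/- Let F be a vertex-preserving endofunctor on directed graphs that is not the full disconnection functor. Then F(Kn)=Kn for every n, where Kn is the complete graph on n vertices. -/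
/-- if F is not the full disconnection functor then F(Kn) = Kn for all n. -/
theorem complete_graphs_fixed (F : GraphFunctor)
    (h : ¬ ∀ (V : Type) [Finite V] (E : V → V → Prop), Reflexive E →
        ∀ x y, F.obj V E x y ↔ x = y) :
    ∀ n : ℕ, F.obj (Fin n) (fun _ _ => True) = fun _ _ => True := by
  classical
  push_neg at h
  obtain ⟨V, _, E, hE, x, y, hxy⟩ := h
  have hrefl := F.refl V E hE
  obtain ⟨hFE, hne⟩ | ⟨hc, heq⟩ := hxy
  swap
  · exact absurd (heq ▸ hrefl x) hc
  intro n
  funext a b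
  apply propext
  constructor
  · intro _; trivial
  · intro _
    by_cases hab : a = b
    · subst hab
      exact F.refl (Fin n) (fun _ _ => True) (fun _ => trivial) a
    · set φ : V → Fin n := fun z => if z = x then a else b with hφ
      have hmap : IsGraphMap E (fun _ _ => True) φ := fun _ _ _ => Or.inl trivial
      have := F.map V (Fin n) E (fun _ _ => True) φ hE (fun _ => trivial) hmap x y hFE
      have hx : φ x = a := by simp [hφ]
      have hy : φ y = b := by simp [hφ, Ne.symm hne]
      rw [hx, hy] at this
      exact this.resolve_right hab
end

section
/- Let F be a vertex-preserving endofunctor on directed graphs such that F(G) is transitive for every G, F(D2)=D2, and F(L2)=L2. Then F equals the transitive closure functor: for all G and vertices v,v', there is an arrow v→v' in F(G) if and only if there is a directed path from v to v' in G. -/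
/-- a functor with transitive images, F(D2)=D2 and F(L2)=L2
is the transitive closure functor. -/
theorem tc_characterization (F : GraphFunctor)
    (htrans : ∀ (V : Type) [Finite V] (E : V → V → Prop), Reflexive E →
        Transitive (F.obj V E))
    (hD : F.obj (Fin 2) D2rel = D2rel) (hL : F.obj (Fin 2) L2rel = L2rel) :
    ∀ (V : Type) [Finite V] (E : V → V → Prop), Reflexive E →
      ∀ v v', F.obj V E v v' ↔ Relation.ReflTransGen E v v' := by
  classical
  intro V _ E hrefl v v'
  have hL2refl : Reflexive L2rel := fun a => Or.inl rfl
  constructor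
  · intro hF
    by_contra hnr
    set φ : V → Fin 2 := fun x => if Relation.ReflTransGen E v x then 1 else 0 with hφ
    have hgm : IsGraphMap E L2rel φ := by
      intro x y hxy
      by_cases hx : Relation.ReflTransGen E v x
      · right
        simp only [hφ, if_pos hx, if_pos (hx.tail hxy)]
      · by_cases hy : Relation.ReflTransGen E v y
        · left
          simp only [hφ, if_neg hx, if_pos hy]
          exact Or.inr ⟨rfl, rfl⟩
        · right; simp only [hφ, if_neg hx, if_neg hy]
    have := F.map V (Fin 2) E L2rel φ hrefl hL2refl hgm v v' hF
    rw [hL] at this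
    have hv : φ v = 1 := by simp [hφ, Relation.ReflTransGen.refl]
    have hv' : φ v' = 0 := by simp [hφ, hnr]
    rw [hv, hv'] at this
    rcases this with h | h
    · rcases h with h | ⟨h, _⟩ <;> exact absurd h (by decide)
    · exact absurd h (by decide)
  · have hsub : ∀ a b, E a b → F.obj V E a b := by
      intro a b hab
      have hgm : IsGraphMap L2rel E ![a, b] := by
        intro x y hxy
        rcases hxy with h | ⟨h0, h1⟩
        · right; rw [h]
        · left; rw [h0, h1]; exact hab
      have hm := F.map (Fin 2) V L2rel E ![a, b] hL2refl hrefl hgm 0 1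
        (by rw [hL]; exact Or.inr ⟨rfl, rfl⟩)
      rcases hm with h | h
      · simpa using h
      · have hab' : a = b := by simpa using h
        subst hab'; exact F.refl V E hrefl a
    intro h
    induction h with
    | refl => exact F.refl V E hrefl v
    | tail _ hbc ih => exact htrans V E hrefl ih (hsub _ _ hbc)
end

section
/- For any symmetric directed graph G (with self-loops) and any vertices v, v' of G, there exists a graph map φ: G → G with φ(v)=v' and φ(v')=v. -/
/-- any symmetric graph admits a graph self-map swapping two given vertices. -/
theorem symmetric_swap_map {V : Type} [Finite V] (E : V → V → Prop)
    (hrefl : Reflexive E) (hsym : Symmetric E) (v v' : V) :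
    ∃ φ : V → V, IsGraphMap E E φ ∧ φ v = v' ∧ φ v' = v := by
  classical
  set G : SimpleGraph V :=
    { Adj := fun x y => E x y ∧ x ≠ y
      symm := ⟨fun x y h => ⟨hsym h.1, fun e => h.2 e.symm⟩⟩
      loopless := ⟨fun x h => h.2 rfl⟩ } with hG
  have hadjE : ∀ {x y}, G.Adj x y → E x y := fun h => h.1
  have hreach : ∀ {x y}, E x y → x = y ∨ G.Adj x y := by
    intro x y h
    by_cases hxy : x = y
    · exact Or.inl hxy
    · exact Or.inr ⟨h, hxy⟩
  by_cases hvr : G.Reachable v v'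
  · -- connected case: retract along a geodesic
    obtain ⟨p, hp⟩ := hvr.exists_walk_length_eq_dist
    set n := G.dist v v' with hn
    refine ⟨fun x => p.getVert (n - min (G.dist v x) n), ?_, ?_, ?_⟩
    · intro x y hxy
      rcases hreach hxy with rfl | hadj
      · exact Or.inr rfl
      by_cases hrx : G.Reachable v x
      · have hry : G.Reachable v y := hrx.trans hadj.reachable
        -- distances differ by at most 1
        have h1 : G.dist v y ≤ G.dist v x + 1 := by
          obtain ⟨q, hq⟩ := hrx.exists_walk_length_eq_dist
          have := G.dist_le (q.append hadj.toWalk)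
          simpa [SimpleGraph.Walk.length_append, hq] using this
        have h2 : G.dist v x ≤ G.dist v y + 1 := by
          obtain ⟨q, hq⟩ := hry.exists_walk_length_eq_dist
          have := G.dist_le (q.append hadj.symm.toWalk)
          simpa [SimpleGraph.Walk.length_append, hq] using this
        set a := n - min (G.dist v x) n with ha
        set b := n - min (G.dist v y) n with hb
        have key : ∀ i j : ℕ, j = i + 1 → j ≤ n →
            E (p.getVert i) (p.getVert j) ∨ p.getVert i = p.getVert j := by
          intro i j hj hjn
          subst hj
          exact Or.inl (hadjE (p.adj_getVert_succ (by omega)))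
        rcases Nat.lt_trichotomy a b with h | h | h
        · have hb1 : b = a + 1 := by omega
          exact key a b hb1 (by omega)
        · exact Or.inr (congrArg p.getVert h)
        · have ha1 : a = b + 1 := by omega
          rcases key b a ha1 (by omega) with h' | h'
          · exact Or.inl (hsym h')
          · exact Or.inr h'.symm
      · have hry : ¬ G.Reachable v y := fun h => hrx (h.trans hadj.symm.reachable)
        right
        simp only [G.dist_eq_zero_of_not_reachable hrx, G.dist_eq_zero_of_not_reachable hry]
    · simp [SimpleGraph.dist_self, ← hp, SimpleGraph.Walk.getVert_length]
    · simp [← hn]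
  · -- disconnected case
    refine ⟨fun x => if G.Reachable v x then v' else v, ?_, ?_, ?_⟩
    · intro x y hxy
      rcases hreach hxy with rfl | hadj
      · exact Or.inr rfl
      · right
        have : G.Reachable v x ↔ G.Reachable v y :=
          ⟨fun h => h.trans hadj.reachable, fun h => h.trans hadj.symm.reachable⟩
        by_cases h : G.Reachable v x <;> simp [h, this.mp, ← this] at * <;> simp [h, this]
    · simp only [if_pos (SimpleGraph.Reachable.refl v)]
    · simp only [if_neg hvr]
end

section
/- Every vertex-preserving endofunctor F on directed graphs other than the full completion functor is additive: F(G1 ⊔ G2) = F(G1) ⊔ F(G2) for all graphs G1, G2, where ⊔ denotes disjoint union. -/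
/-- The disjoint union of two arrow relations. -/
def sumRel {V1 V2 : Type} (E1 : V1 → V1 → Prop) (E2 : V2 → V2 → Prop) :
    V1 ⊕ V2 → V1 ⊕ V2 → Prop := fun a b =>
  match a, b with
  | Sum.inl x, Sum.inl y => E1 x y
  | Sum.inr x, Sum.inr y => E2 x y
  | _, _ => False

lemma D2refl : Reflexive D2rel := fun _ => rfl

/-- If `F` is not the completion functor, then `F(D2)` has no edge between
the two distinct vertices. -/
lemma FD2_eq (F : GraphFunctor)
    (h : ¬ ∀ (V : Type) [Finite V] (E : V → V → Prop), Reflexive E →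
        ∀ x y, F.obj V E x y) :
    ∀ a b : Fin 2, F.obj (Fin 2) D2rel a b → a = b := by
  intro a b hab
  by_contra hne
  apply h
  intro V _ E hE x y
  by_cases hxy : x = y
  · subst hxy; exact F.refl V E hE x
  · set φ : Fin 2 → V := fun c => if c = a then x else y with hφ
    have hmap : IsGraphMap D2rel E φ := by
      intro p q hpq
      right
      have : p = q := hpq
      rw [this]
    have := F.map (Fin 2) V D2rel E φ D2refl hE hmap a b hab
    have hφa : φ a = x := by simp [hφ]
    have hφb : φ b = y := if_neg (fun hba => hne hba.symm)
    rw [hφa, hφb] at this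
    rcases this with h' | h'
    · exact h'
    · exact absurd h' hxy

/-- every endofunctor other than full completion is additive. -/
theorem additive_of_not_completion (F : GraphFunctor)
    (h : ¬ ∀ (V : Type) [Finite V] (E : V → V → Prop), Reflexive E →
        ∀ x y, F.obj V E x y)
    (V1 V2 : Type) [Finite V1] [Finite V2]
    (E1 : V1 → V1 → Prop) (E2 : V2 → V2 → Prop)
    (h1 : Reflexive E1) (h2 : Reflexive E2) :
    F.obj (V1 ⊕ V2) (sumRel E1 E2) = sumRel (F.obj V1 E1) (F.obj V2 E2) := by
  have hD2 := FD2_eq F h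
  have hsum : Reflexive (sumRel E1 E2) := by
    intro a; cases a with
    | inl x => exact h1 x
    | inr x => exact h2 x
  -- the projection to D2
  have hproj : IsGraphMap (sumRel E1 E2) D2rel
      (Sum.elim (fun _ => (0 : Fin 2)) (fun _ => (1 : Fin 2))) := by
    intro p q hpq
    cases p <;> cases q <;> first | (right; rfl) | exact hpq.elim
  have hprojF := F.map (V1 ⊕ V2) (Fin 2) (sumRel E1 E2) D2rel _ hsum D2refl hproj
  funext a b
  apply propext
  constructor
  · intro hab
    cases a with
    | inl x =>
      cases b with
      | inl y =>
        -- retraction onto V1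
        have hr : IsGraphMap (sumRel E1 E2) E1 (Sum.elim id (fun _ => x)) := by
          intro p q hpq
          cases p <;> cases q
          · exact Or.inl hpq
          · exact hpq.elim
          · exact hpq.elim
          · exact Or.inr rfl
        have := F.map (V1 ⊕ V2) V1 (sumRel E1 E2) E1 _ hsum h1 hr _ _ hab
        simp only [Sum.elim_inl, id] at this
        rcases this with h' | h'
        · exact h'
        · rw [h']; exact F.refl V1 E1 h1 y
      | inr y =>
        have := hprojF _ _ hab
        simp only [Sum.elim_inl, Sum.elim_inr] at this
        rcases this with h' | h'
        · exact absurd (hD2 _ _ h') (by decide)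
        · exact absurd h' (by decide)
    | inr x =>
      cases b with
      | inl y =>
        have := hprojF _ _ hab
        simp only [Sum.elim_inl, Sum.elim_inr] at this
        rcases this with h' | h'
        · exact absurd (hD2 _ _ h') (by decide)
        · exact absurd h' (by decide)
      | inr y =>
        have hr : IsGraphMap (sumRel E1 E2) E2 (Sum.elim (fun _ => x) id) := by
          intro p q hpq
          cases p <;> cases q
          · exact Or.inr rfl
          · exact hpq.elim
          · exact hpq.elim
          · exact Or.inl hpq
        have := F.map (V1 ⊕ V2) V2 (sumRel E1 E2) E2 _ hsum h2 hr _ _ hab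
        simp only [Sum.elim_inr, id] at this
        rcases this with h' | h'
        · exact h'
        · rw [h']; exact F.refl V2 E2 h2 y
  · intro hab
    cases a with
    | inl x =>
      cases b with
      | inl y =>
        have hinl : IsGraphMap E1 (sumRel E1 E2) Sum.inl := fun p q hpq => Or.inl hpq
        have := F.map V1 (V1 ⊕ V2) E1 (sumRel E1 E2) Sum.inl h1 hsum hinl x y hab
        rcases this with h' | h'
        · exact h'
        · rw [h']; exact F.refl _ _ hsum _
      | inr y => exact hab.elim
    | inr x =>
      cases b with
      | inl y => exact hab.elim
      | inr y =>
        have hinr : IsGraphMap E2 (sumRel E1 E2) Sum.inr := fun p q hpq => Or.inl hpq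
        have := F.map V2 (V1 ⊕ V2) E2 (sumRel E1 E2) Sum.inr h2 hsum hinr x y hab
        rcases this with h' | h'
        · exact h'
        · rw [h']; exact F.refl _ _ hsum _
end

section
/- Let F be a vertex-preserving endofunctor on directed graphs and let A = {ω : F(ω) is the complete graph on the vertices of ω} be its set of completions. Then F^A ≤ F^ls ∘ F ≤ F, where F^A is the functor represented by A and F^ls is lower symmetrization. -/
/-- with A = Comp(F) the set of completions of F, we have
F^A ≤ F^ls ∘ F ≤ F. -/
theorem completions_bound (F : GraphFunctor)
    (V : Type) [Finite V] (E : V → V → Prop) (hE : Reflexive E) (v v' : V) :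
    ((∃ (W : Type) (iW : Finite W) (EW : W → W → Prop), Reflexive EW ∧
        (∀ a b, @GraphFunctor.obj F W iW EW a b) ∧
        ∃ φ : W → V, IsGraphMap EW E φ ∧ (∃ a, φ a = v) ∧ (∃ b, φ b = v')) →
      (F.obj V E v v' ∧ F.obj V E v' v)) ∧
    ((F.obj V E v v' ∧ F.obj V E v' v) → F.obj V E v v') := by
  constructor
  · rintro ⟨W, iW, EW, hEW, hcomp, φ, hφ, ⟨a, ha⟩, ⟨b, hb⟩⟩
    have hmap := F.map W V EW E φ hEW hE hφ
    have h1 := hmap a b (hcomp a b)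
    have h2 := hmap b a (hcomp b a)
    rw [ha, hb] at h1 h2
    constructor
    · rcases h1 with h | h
      · exact h
      · exact h ▸ F.refl V E hE v
    · rcases h2 with h | h
      · exact h
      · exact h ▸ F.refl V E hE v'
  · exact fun h => h.1
end

section
/- If F is a representable endofunctor, F = F^Ω for some family Ω of graphs, and A = Comp(F) = {ω : F(ω) is complete}, then F = F^A. -/
/-- The relation of the representable functor F^Ω on a graph (V,E). -/
def repRel {ι : Type} (Vω : ι → Type) (Eω : ∀ i, Vω i → Vω i → Prop)
    {V : Type} (E : V → V → Prop) : V → V → Prop := fun v v' =>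
  ∃ (i : ι) (φ : Vω i → V), IsGraphMap (Eω i) E φ ∧ (∃ a, φ a = v) ∧ (∃ b, φ b = v')

/-- a representable functor F = F^Ω is also represented by its
set of completions A = Comp(F) = { ω | F(ω) is complete }. -/
theorem representable_by_completions (F : GraphFunctor)
    {ι : Type} (Vω : ι → Type) [∀ i, Finite (Vω i)]
    (Eω : ∀ i, Vω i → Vω i → Prop) (hEω : ∀ i, Reflexive (Eω i))
    (hrep : ∀ (V : Type) [Finite V] (E : V → V → Prop), Reflexive E →
        ∀ v v', F.obj V E v v' ↔ repRel Vω Eω E v v') :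
    ∀ (V : Type) [Finite V] (E : V → V → Prop), Reflexive E →
      ∀ v v', F.obj V E v v' ↔
        ∃ (W : Type) (iW : Finite W) (EW : W → W → Prop), Reflexive EW ∧
          (∀ a b, @GraphFunctor.obj F W iW EW a b) ∧
          ∃ φ : W → V, IsGraphMap EW E φ ∧ (∃ a, φ a = v) ∧ (∃ b, φ b = v') := by
  intro V _ E hE v v'
  constructor
  · intro h
    obtain ⟨i, φ, hφ, ha, hb⟩ := (hrep V E hE v v').mp h
    refine ⟨Vω i, inferInstance, Eω i, hEω i, ?_, φ, hφ, ha, hb⟩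
    intro a b
    exact (hrep (Vω i) (Eω i) (hEω i) a b).mpr
      ⟨i, id, fun x y hxy => Or.inl hxy, ⟨a, rfl⟩, ⟨b, rfl⟩⟩
  · rintro ⟨W, iW, EW, hEW, hcomp, φ, hφ, ⟨a, rfl⟩, ⟨b, rfl⟩⟩
    have := F.map W V EW E φ hEW hE hφ a b (hcomp a b)
    rcases this with h | h
    · exact h
    · rw [h]; exact F.refl V E hE _
end

section
/- Let F be a vertex-preserving endofunctor on directed graphs with F ≠ F^disc and F ≠ F^comp. Then F^ls ≤ F ≤ F^conn, i.e., for every graph G: every arrow of the lower symmetrization of G is an arrow of F(G), and every arrow of F(G) connects vertices lying in the same weakly connected component of G. -/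
/-- if F is neither full disconnection nor full completion then
F^ls ≤ F ≤ F^conn. -/
theorem ls_le_F_le_conn (F : GraphFunctor)
    (hdisc : ¬ ∀ (V : Type) [Finite V] (E : V → V → Prop), Reflexive E →
        ∀ x y, F.obj V E x y ↔ x = y)
    (hcomp : ¬ ∀ (V : Type) [Finite V] (E : V → V → Prop), Reflexive E →
        ∀ x y, F.obj V E x y) :
    ∀ (V : Type) [Finite V] (E : V → V → Prop), Reflexive E → ∀ x y,
      (E x y ∧ E y x → F.obj V E x y) ∧
      (F.obj V E x y → Relation.ReflTransGen (fun a b => E a b ∨ E b a) x y) := by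
  classical
  have hK2refl : Reflexive K2rel := fun _ => trivial
  have hD2refl : Reflexive D2rel := fun _ => rfl
  -- F(K2) has the arrow 0 → 1
  have hK2 : F.obj (Fin 2) K2rel 0 1 := by
    by_contra h
    apply hdisc
    intro V' _ E' hE' a b
    constructor
    · intro hab
      by_contra hne
      have hm : IsGraphMap E' K2rel (fun v => if v = a then 0 else 1) := by
        intro u v _; left; trivial
      have := F.map V' (Fin 2) E' K2rel _ hE' hK2refl hm a b hab
      rcases this with h1 | h2
      · rw [if_pos rfl, if_neg (Ne.symm hne)] at h1
        exact h h1
      · rw [if_pos rfl, if_neg (Ne.symm hne)] at h2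
        exact absurd h2 (by decide)
    · intro h; subst h; exact F.refl V' E' hE' a
  intro V _ E hrefl x y
  constructor
  · rintro ⟨hxy, hyx⟩
    have hm : IsGraphMap K2rel E (fun i => if i = 0 then x else y) := by
      intro u v _
      fin_cases u <;> fin_cases v
      · right; rfl
      · left; simpa using hxy
      · left; simpa using hyx
      · right; rfl
    have := F.map (Fin 2) V K2rel E _ hK2refl hrefl hm 0 1 hK2
    simp only [if_pos rfl] at this
    rw [if_neg (by decide : ¬ (1 : Fin 2) = 0)] at this
    rcases this with h | h
    · exact h
    · exact h ▸ F.refl V E hrefl x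
  · intro hF
    by_contra hconn
    set C := fun v => Relation.ReflTransGen (fun a b => E a b ∨ E b a) x v with hC
    have hm : IsGraphMap E D2rel (fun v => if C v then 0 else 1) := by
      intro u v huv
      right
      by_cases h : C u
      · have hv : C v := h.tail (Or.inl huv)
        simp [h, hv]
      · have hv : ¬ C v := fun hcv => h (hcv.tail (Or.inr huv))
        simp [h, hv]
    have hCx : C x := Relation.ReflTransGen.refl
    have hD : F.obj (Fin 2) D2rel 0 1 := by
      have := F.map V (Fin 2) E D2rel _ hrefl hD2refl hm x y hF
      rw [if_pos hCx, if_neg hconn] at this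
      rcases this with h | h
      · exact h
      · exact absurd h (by decide)
    apply hcomp
    intro V' _ E' hE' a b
    have hm2 : IsGraphMap D2rel E' (fun i => if i = 0 then a else b) := by
      intro u v huv
      cases huv
      right; rfl
    have := F.map (Fin 2) V' D2rel E' _ hD2refl hE' hm2 0 1 hD
    rw [if_pos rfl, if_neg (by decide : ¬ (1 : Fin 2) = 0)] at this
    rcases this with h | h
    · exact h
    · exact h ▸ F.refl V' E' hE' a
end

section
/- Let Ω1*, Ω2* be families of pointed graphs with pointed representable functors F1=F^{Ω1*} and F2=F^{Ω2*}. Then F1 ≤ F2 if and only if Ω1* ≼ Ω2*, i.e., for every (ω1,z1,ẑ1)∈Ω1* there exist (ω2,z2,ẑ2)∈Ω2* and a graph map p:(ω2,z2,ẑ2)→(ω1,z1,ẑ1) with p(z2)=z1 and p(ẑ2)=ẑ1. -/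
/-- The relation of a pointed representable functor F^{Ω*} on a graph (V,E). -/
def ptRel {ι : Type} (Vω : ι → Type) (Eω : ∀ i, Vω i → Vω i → Prop)
    (z zz : ∀ i, Vω i) {V : Type} (E : V → V → Prop) : V → V → Prop := fun v v' =>
  ∃ (i : ι) (φ : Vω i → V), IsGraphMap (Eω i) E φ ∧ φ (z i) = v ∧ φ (zz i) = v'

/-- F^{Ω₁*} ≤ F^{Ω₂*} iff Ω₁* ≼ Ω₂* (covering of pointed families). -/
theorem pointed_le_iff_covering
    {ι₁ ι₂ : Type}
    (V₁ : ι₁ → Type) [∀ i, Finite (V₁ i)]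
    (E₁ : ∀ i, V₁ i → V₁ i → Prop) (hE₁ : ∀ i, Reflexive (E₁ i))
    (z₁ zz₁ : ∀ i, V₁ i)
    (V₂ : ι₂ → Type) [∀ j, Finite (V₂ j)]
    (E₂ : ∀ j, V₂ j → V₂ j → Prop) (hE₂ : ∀ j, Reflexive (E₂ j))
    (z₂ zz₂ : ∀ j, V₂ j) :
    (∀ (V : Type) [Finite V] (E : V → V → Prop), Reflexive E →
        ∀ v v', ptRel V₁ E₁ z₁ zz₁ E v v' → ptRel V₂ E₂ z₂ zz₂ E v v') ↔
    (∀ i : ι₁, ∃ (j : ι₂) (p : V₂ j → V₁ i),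
        IsGraphMap (E₂ j) (E₁ i) p ∧ p (z₂ j) = z₁ i ∧ p (zz₂ j) = zz₁ i) := by
  constructor
  · intro h i
    have := h (V₁ i) (E₁ i) (hE₁ i) (z₁ i) (zz₁ i) ⟨i, id, fun x y hxy => Or.inl hxy, rfl, rfl⟩
    obtain ⟨j, p, hp, h1, h2⟩ := this
    exact ⟨j, p, hp, h1, h2⟩
  · rintro h V _ E hE v v' ⟨i, φ, hφ, h1, h2⟩
    obtain ⟨j, p, hp, hp1, hp2⟩ := h i
    refine ⟨j, φ ∘ p, ?_, by simp [hp1, h1], by simp [hp2, h2]⟩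
    intro x y hxy
    rcases hp x y hxy with h' | h'
    · exact hφ _ _ h'
    · exact Or.inr (by simp [Function.comp, h'])
end

section
/- Let Ω be a family of graphs. Then Ω is wedge covered (Ω∨Ω ≼ Ω) if and only if F^Ω is a clustering functor, i.e., F^Ω(G) is symmetric and transitive for every graph G. -/
/-- The vertex set of the wedge (ω_{i₁}, p₁) ∨ (ω_{i₂}, p₂): the disjoint union
with p₁ identified with p₂. -/
def WedgeV {ι : Type} (Vω : ι → Type) (i₁ i₂ : ι) (p₁ : Vω i₁) (p₂ : Vω i₂) : Type :=
  Quot (fun a b : Vω i₁ ⊕ Vω i₂ => a = Sum.inl p₁ ∧ b = Sum.inr p₂)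

/-- The arrows of the wedge: arrows coming from either of the two summands. -/
def wedgeRel {ι : Type} (Vω : ι → Type) (Eω : ∀ i, Vω i → Vω i → Prop)
    (i₁ i₂ : ι) (p₁ : Vω i₁) (p₂ : Vω i₂) :
    WedgeV Vω i₁ i₂ p₁ p₂ → WedgeV Vω i₁ i₂ p₁ p₂ → Prop := fun x y =>
  (∃ a b, Eω i₁ a b ∧
      x = Quot.mk (fun a b : Vω i₁ ⊕ Vω i₂ => a = Sum.inl p₁ ∧ b = Sum.inr p₂) (Sum.inl a) ∧
      y = Quot.mk (fun a b : Vω i₁ ⊕ Vω i₂ => a = Sum.inl p₁ ∧ b = Sum.inr p₂) (Sum.inl b)) ∨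
  (∃ a b, Eω i₂ a b ∧
      x = Quot.mk (fun a b : Vω i₁ ⊕ Vω i₂ => a = Sum.inl p₁ ∧ b = Sum.inr p₂) (Sum.inr a) ∧
      y = Quot.mk (fun a b : Vω i₁ ⊕ Vω i₂ => a = Sum.inl p₁ ∧ b = Sum.inr p₂) (Sum.inr b))

lemma isGraphMap_comp {V W X : Type} {E : V → V → Prop} {E' : W → W → Prop}
    {E'' : X → X → Prop} {φ : V → W} {ψ : W → X}
    (h1 : IsGraphMap E E' φ) (h2 : IsGraphMap E' E'' ψ) :
    IsGraphMap E E'' (ψ ∘ φ) := by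
  intro x y hxy
  rcases h1 x y hxy with h | h
  · exact h2 _ _ h
  · right; simp only [Function.comp, h]

/-- Ω is wedge covered iff F^Ω is a clustering functor
(symmetric and transitive output on every graph). -/
theorem wedge_covered_iff_clustering {ι : Type} (Vω : ι → Type) [∀ i, Finite (Vω i)]
    (Eω : ∀ i, Vω i → Vω i → Prop) (hEω : ∀ i, Reflexive (Eω i)) :
    (∀ (i₁ i₂ : ι) (p₁ : Vω i₁) (p₂ : Vω i₂) (x y : WedgeV Vω i₁ i₂ p₁ p₂),
        ∃ (i : ι) (φ : Vω i → WedgeV Vω i₁ i₂ p₁ p₂),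
          IsGraphMap (Eω i) (wedgeRel Vω Eω i₁ i₂ p₁ p₂) φ ∧
          (∃ a, φ a = x) ∧ (∃ b, φ b = y)) ↔
    (∀ (V : Type) [Finite V] (E : V → V → Prop), Reflexive E →
        Symmetric (repRel Vω Eω E) ∧ Transitive (repRel Vω Eω E)) := by
  constructor
  · intro hwc V _ E hE
    constructor
    · rintro v v' ⟨i, φ, hφ, ⟨a, ha⟩, ⟨b, hb⟩⟩
      exact ⟨i, φ, hφ, ⟨b, hb⟩, ⟨a, ha⟩⟩
    · rintro u v w ⟨i₁, φ₁, hφ₁, ⟨a₁, ha₁⟩, ⟨b₁, hb₁⟩⟩ ⟨i₂, φ₂, hφ₂, ⟨a₂, ha₂⟩, ⟨b₂, hb₂⟩⟩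
      let ψ : WedgeV Vω i₁ i₂ b₁ a₂ → V :=
        Quot.lift (Sum.elim φ₁ φ₂) (by rintro a b ⟨rfl, rfl⟩; simp [hb₁, ha₂])
      have hψ : IsGraphMap (wedgeRel Vω Eω i₁ i₂ b₁ a₂) E ψ := by
        rintro x y (⟨a, b, hab, rfl, rfl⟩ | ⟨a, b, hab, rfl, rfl⟩)
        · exact hφ₁ a b hab
        · exact hφ₂ a b hab
      obtain ⟨i, φ, hφ, ⟨a, ha⟩, ⟨b, hb⟩⟩ :=
        hwc i₁ i₂ b₁ a₂ (Quot.mk _ (Sum.inl a₁)) (Quot.mk _ (Sum.inr b₂))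
      refine ⟨i, ψ ∘ φ, isGraphMap_comp hφ hψ, ⟨a, ?_⟩, ⟨b, ?_⟩⟩
      · show ψ (φ a) = u
        rw [ha]; exact ha₁
      · show ψ (φ b) = w
        rw [hb]; exact hb₂
  · intro hcl i₁ i₂ p₁ p₂ x y
    haveI : Finite (WedgeV Vω i₁ i₂ p₁ p₂) := Quot.finite _
    have hrefl : Reflexive (wedgeRel Vω Eω i₁ i₂ p₁ p₂) := by
      intro z
      induction z using Quot.ind with
      | _ s =>
        cases s with
        | inl a => exact Or.inl ⟨a, a, hEω i₁ a, rfl, rfl⟩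
        | inr b => exact Or.inr ⟨b, b, hEω i₂ b, rfl, rfl⟩
    obtain ⟨hsymm, htrans⟩ := hcl _ (wedgeRel Vω Eω i₁ i₂ p₁ p₂) hrefl
    have key : ∀ z, repRel Vω Eω (wedgeRel Vω Eω i₁ i₂ p₁ p₂) z
        (Quot.mk _ (Sum.inl p₁)) := by
      intro z
      induction z using Quot.ind with
      | _ s =>
        cases s with
        | inl a => exact ⟨i₁, fun v => Quot.mk _ (Sum.inl v),
            fun u v h => Or.inl (Or.inl ⟨u, v, h, rfl, rfl⟩), ⟨a, rfl⟩, ⟨p₁, rfl⟩⟩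
        | inr b =>
          refine ⟨i₂, fun v => Quot.mk _ (Sum.inr v),
            fun u v h => Or.inl (Or.inr ⟨u, v, h, rfl, rfl⟩), ⟨b, rfl⟩, ⟨p₂, ?_⟩⟩
          exact (Quot.sound ⟨rfl, rfl⟩).symm
    exact htrans (key x) (hsymm (key y))
end

section
/- Let F be a vertex-preserving endofunctor from directed graphs to clustering graphs (images are symmetric and transitive) satisfying F(L2)=D2 and F(K2)=K2. Then F^rec ≤ F ≤ F^nrec, where F^rec(G) has an arrow v→v' iff v and v' are joined by a chain of bidirectional arrows in G, and F^nrec(G) has an arrow v→v' iff v and v' lie on a common directed cycle of G (equivalently v↝v' and v'↝v). -/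
/-- any clustering-valued endofunctor satisfying the axiom of value
lies between reciprocal and non-reciprocal clustering: F^rec ≤ F ≤ F^nrec. -/
theorem rec_le_F_le_nrec (F : GraphFunctor)
    (hclust : ∀ (V : Type) [Finite V] (E : V → V → Prop), Reflexive E →
        Symmetric (F.obj V E) ∧ Transitive (F.obj V E))
    (hL : F.obj (Fin 2) L2rel = D2rel) (hK : F.obj (Fin 2) K2rel = K2rel) :
    ∀ (V : Type) [Finite V] (E : V → V → Prop), Reflexive E → ∀ v v',
      (Relation.ReflTransGen (fun a b => E a b ∧ E b a) v v' → F.obj V E v v') ∧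
      (F.obj V E v v' → Relation.ReflTransGen E v v' ∧ Relation.ReflTransGen E v' v) := by
  intro V _ E hE v v'
  have hrefl := F.refl V E hE
  obtain ⟨hsym, htrans⟩ := hclust V E hE
  have hK2refl : Reflexive K2rel := fun _ => trivial
  have hL2refl : Reflexive L2rel := fun a => Or.inl rfl
  constructor
  · intro h
    induction h with
    | refl => exact hrefl v
    | @tail b c _ hbc ih =>
      have key : F.obj V E b c := by
        set φ : Fin 2 → V := fun i => if i = 0 then b else c with hφ
        have hmap : IsGraphMap K2rel E φ := by
          intro x y _
          fin_cases x <;> fin_cases y <;> simp [hφ]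
          · exact Or.inl hbc.1
          · exact Or.inl hbc.2
        have h2 := F.map (Fin 2) V K2rel E φ hK2refl hE hmap
        rw [hK] at h2
        have h01 := h2 0 1 trivial
        simp [hφ] at h01
        rcases h01 with h01 | h01
        · exact h01
        · rw [h01]; exact hrefl c
      exact htrans ih key
  · intro hF
    have main : ∀ a b, F.obj V E a b → Relation.ReflTransGen E a b := by
      intro a b hab
      by_contra hnot
      classical
      set φ : V → Fin 2 := fun x => if Relation.ReflTransGen E a x then 1 else 0 with hφ
      have hmap : IsGraphMap E L2rel φ := by
        intro x y hxy
        by_cases hx : Relation.ReflTransGen E a x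
        · have hy : Relation.ReflTransGen E a y := hx.tail hxy
          right; simp [hφ, hx, hy]
        · by_cases hy : Relation.ReflTransGen E a y
          · left; simp [hφ, hx, hy, L2rel]
          · right; simp [hφ, hx, hy]
      have h2 := F.map V (Fin 2) E L2rel φ hE hL2refl hmap
      rw [hL] at h2
      have h3 := h2 a b hab
      have heq : φ a = φ b := by
        rcases h3 with h | h
        · exact h
        · exact h
      have ha : φ a = 1 := by simp [hφ, Relation.ReflTransGen.refl]
      have hb : φ b = 0 := by simp [hφ, hnot]
      rw [ha, hb] at heq
      exact absurd heq (by decide)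
    exact ⟨main v v' hF, main v' v (hsym hF)⟩
end
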